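/- Let d > m > 2 be integers, g_t(z) = z^d + t z^(m-1) + Σ_{i=2}^m (α_i t + β_i) z^(m-i) with α_2 ≠ 0, and c_m, c_{m+1} ∈ ℂ distinct from the roots of A(z) = ∏(z - c_i). If for some integer n > 2 we have g_t^n(c_m) = g_t^n(c_{m+1}) as polynomials in t, then g_t^(n-1)(c_m) = g_t^(n-1)(c_{m+1}). -/

import Mathlib

open Polynomial

/-- `polyIter p n` is the `n`-fold composition `p ∘ p ∘ ⋯ ∘ p`. -/
noncomputable def polyIter {R : Type*} [CommSemiring R] (p : Polynomial R) : ℕ → Polynomial R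
  | 0 => X
  | n + 1 => p.comp (polyIter p n)

lemma eval_g_eq (d m : ℕ) (α β : ℕ → ℂ) (g : Polynomial (Polynomial ℂ))
    (hg : g = X ^ d + C X * X ^ (m - 1) +
      ∑ i ∈ Finset.Icc 2 m, C (C (α i) * X + C (β i)) * X ^ (m - i))
    (p : Polynomial ℂ) :
    g.eval p = p ^ d + X * p ^ (m - 1) +
      ∑ i ∈ Finset.Icc 2 m, (C (α i) * X + C (β i)) * p ^ (m - i) := by
  subst hg
  simp [eval_finset_sum]

lemma coeff_zero_of_add_eq_zero {g h : Polynomial ℂ} {N : ℕ} (hf : g + h = 0)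
    (hh : h.natDegree < N) : g.coeff N = 0 := by
  have hg : g = -h := eq_neg_of_add_eq_zero_left hf
  rw [hg, coeff_neg, coeff_eq_zero_of_natDegree_lt hh, neg_zero]

lemma rem_deg (d m : ℕ) (hm : 2 < m) (α β : ℕ → ℂ) (p : Polynomial ℂ) :
    ((X : Polynomial ℂ) * p ^ (m-1)
      + ∑ i ∈ Finset.Icc 2 m, (C (α i) * X + C (β i)) * p ^ (m - i)).natDegree
      ≤ (m-1) * p.natDegree + 1 := by
  apply le_trans (natDegree_add_le _ _)
  apply max_le
  · apply le_trans (natDegree_mul_le)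
    have := natDegree_pow_le (p := p) (n := m-1)
    simp only [natDegree_X]
    omega
  · apply le_trans (natDegree_sum_le _ _)
    apply (Finset.fold_max_le _).mpr
    constructor
    · omega
    · intro i hi
      simp only [Finset.mem_Icc] at hi
      apply le_trans (natDegree_mul_le)
      have h1 : (C (α i) * X + C (β i)).natDegree ≤ 1 := by
        apply le_trans (natDegree_add_le _ _)
        simp [natDegree_C_mul_le, le_trans (natDegree_C_mul_le _ _)]
      have h2 : (p ^ (m-i)).natDegree ≤ (m-i) * p.natDegree := natDegree_pow_le
      have h3 : (m-i) * p.natDegree ≤ (m-1) * p.natDegree := by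
        apply Nat.mul_le_mul_right; omega
      omega

lemma iter_deg (d m : ℕ) (hm : 2 < m) (hd : m < d) (α β : ℕ → ℂ)
    (g : Polynomial (Polynomial ℂ))
    (hg : g = X ^ d + C X * X ^ (m - 1) +
      ∑ i ∈ Finset.Icc 2 m, C (C (α i) * X + C (β i)) * X ^ (m - i))
    (A : Polynomial ℂ)
    (hA : A = X ^ (m - 1) + ∑ i ∈ Finset.Icc 2 m, C (α i) * X ^ (m - i))
    (c : ℂ) (hc : A.eval c ≠ 0) :
    ∀ k : ℕ, ((polyIter g (k+1)).eval (C c)) ≠ 0 ∧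
      ((polyIter g (k+1)).eval (C c)).natDegree = d ^ k := by
  have hAe : A.eval c = c ^ (m-1) + ∑ i ∈ Finset.Icc 2 m, α i * c ^ (m - i) := by
    subst hA; simp [eval_finset_sum]
  intro k
  induction k with
  | zero =>
    have h0 : (polyIter g (0+1)).eval (C c) = g.eval (C c) := by
      simp [polyIter, eval_comp]
    rw [h0, eval_g_eq d m α β g hg]
    set p1 := (C c : Polynomial ℂ) ^ d + X * (C c) ^ (m - 1) +
      ∑ i ∈ Finset.Icc 2 m, (C (α i) * X + C (β i)) * (C c) ^ (m - i) with hp1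
    have hco : p1.coeff 1 = A.eval c := by
      rw [hAe, hp1, coeff_add, coeff_add, finset_sum_coeff]
      rw [← C_pow, coeff_C]
      simp only [← C_pow, coeff_X_mul, coeff_C]
      congr 1
      · simp
      · apply Finset.sum_congr rfl
        intro i _
        rw [coeff_mul_C, coeff_add, coeff_C_mul, coeff_X, coeff_C]
        simp
    have hne : p1 ≠ 0 := fun h => hc (by rw [← hco, h, coeff_zero])
    have hle : p1.natDegree ≤ 1 := by
      rw [hp1, add_assoc]
      apply le_trans (natDegree_add_le _ _)
      apply max_le
      · rw [← C_pow]; simp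
      · have := rem_deg d m hm α β (C c)
        simp only [natDegree_C, Nat.mul_zero, Nat.zero_add] at this
        exact this
    have hge : 1 ≤ p1.natDegree := le_natDegree_of_ne_zero (by rw [hco]; exact hc)
    exact ⟨hne, by rw [pow_zero]; omega⟩
  | succ k ih =>
    obtain ⟨hne, hdeg⟩ := ih
    have h0 : (polyIter g (k+1+1)).eval (C c) = g.eval ((polyIter g (k+1)).eval (C c)) := by
      simp [polyIter, eval_comp]
    set p := (polyIter g (k+1)).eval (C c) with hp
    rw [h0, eval_g_eq d m α β g hg, add_assoc]
    set r := (X : Polynomial ℂ) * p ^ (m-1)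
      + ∑ i ∈ Finset.Icc 2 m, (C (α i) * X + C (β i)) * p ^ (m - i) with hr
    have hrd : r.natDegree ≤ (m-1) * d^k + 1 := by
      have := rem_deg d m hm α β p
      rwa [hdeg] at this
    have hpd : (p ^ d).natDegree = d ^ (k+1) := by
      rw [natDegree_pow, hdeg]; ring
    have hlt : r.natDegree < (p ^ d).natDegree := by
      rw [hpd]
      have h1 : (1:ℕ) ≤ d ^ k := Nat.one_le_pow _ _ (by omega)
      have h2 : (m-1) * d^k + 1 < d^(k+1) := by
        have : d ^ (k+1) = d * d ^ k := by ring
        rw [this]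
        have hm1 : m - 1 + 2 ≤ d := by omega
        calc (m-1) * d^k + 1 < (m-1) * d^k + 2 * d^k := by omega
          _ = (m-1+2) * d^k := by ring
          _ ≤ d * d^k := Nat.mul_le_mul_right _ hm1
      omega
    have hpne : p ^ d ≠ 0 := pow_ne_zero _ hne
    constructor
    · intro h
      have : p ^ d = -r := eq_neg_of_add_eq_zero_left h
      rw [this, natDegree_neg] at hlt
      omega
    · rw [natDegree_add_eq_left_of_natDegree_lt hlt, hpd]

-- helper lemmas for coefficient extraction
lemma coeff_term (a b z : ℂ) (Q : Polynomial ℂ) (k N : ℕ) (hN : N = k * Q.natDegree + 1) :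
    ((C a * X + C b) * (C z * Q ^ k)).coeff N = a * z * Q.leadingCoeff ^ k := by
  have h1 : (C a * X + C b) * (C z * Q ^ k) = C (a*z) * (X * Q ^ k) + C (b*z) * Q ^ k := by
    simp only [C_mul]; ring
  rw [h1, coeff_add, coeff_C_mul, coeff_C_mul, hN, coeff_X_mul, coeff_pow_mul_natDegree]
  rw [coeff_eq_zero_of_natDegree_lt (by rw [natDegree_pow]; omega)]
  ring

lemma coeff_term' (a b : ℂ) (Q : Polynomial ℂ) (k N : ℕ) (hN : N = k * Q.natDegree + 1) :
    ((C a * X + C b) * Q ^ k).coeff N = a * Q.leadingCoeff ^ k := by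
  have := coeff_term a b 1 Q k N hN
  simpa using this

lemma term_deg_le (a b z : ℂ) (Q : Polynomial ℂ) (k : ℕ) :
    ((C a * X + C b) * (C z * Q ^ k)).natDegree ≤ k * Q.natDegree + 1 := by
  apply le_trans natDegree_mul_le
  have h1 : (C a * X + C b).natDegree ≤ 1 := by
    apply le_trans (natDegree_add_le _ _)
    simp [le_trans (natDegree_C_mul_le _ _)]
  have h2 : (C z * Q ^ k).natDegree ≤ k * Q.natDegree := by
    apply le_trans natDegree_mul_le
    have := natDegree_pow_le (p := Q) (n := k)
    simp only [natDegree_C]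
    omega
  omega

lemma term_deg_le' (a b : ℂ) (Q : Polynomial ℂ) (k : ℕ) :
    ((C a * X + C b) * Q ^ k).natDegree ≤ k * Q.natDegree + 1 := by
  have := term_deg_le a b 1 Q k
  simpa using this

theorem stmt12 (d m : ℕ) (hm : 2 < m) (hd : m < d) (α β : ℕ → ℂ) (hα : α 2 ≠ 0)
    (g : Polynomial (Polynomial ℂ))
    (hg : g = X ^ d + C X * X ^ (m - 1) +
      ∑ i ∈ Finset.Icc 2 m, C (C (α i) * X + C (β i)) * X ^ (m - i))
    (A : Polynomial ℂ)
    (hA : A = X ^ (m - 1) + ∑ i ∈ Finset.Icc 2 m, C (α i) * X ^ (m - i))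
    (cm cm1 : ℂ) (hcm : A.eval cm ≠ 0) (hcm1 : A.eval cm1 ≠ 0)
    (n : ℕ) (hn : 2 < n)
    (heq : (polyIter g n).eval (C cm) = (polyIter g n).eval (C cm1)) :
    (polyIter g (n - 1)).eval (C cm) = (polyIter g (n - 1)).eval (C cm1) := by
  obtain ⟨hPne, hPdeg⟩ := iter_deg d m hm hd α β g hg A hA cm hcm (n-2)
  obtain ⟨hQne, hQdeg⟩ := iter_deg d m hm hd α β g hg A hA cm1 hcm1 (n-2)
  have hn1 : n - 2 + 1 = n - 1 := by omega
  rw [hn1] at hPne hPdeg hQne hQdeg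
  set P := (polyIter g (n-1)).eval (C cm) with hP
  set Q := (polyIter g (n-1)).eval (C cm1) with hQ
  set D := d ^ (n-2) with hDdef
  have hD2 : 2 ≤ D := le_trans (by omega) (Nat.le_self_pow (by omega) d)
  -- rewrite heq as g.eval P = g.eval Q
  have hiter : ∀ c : ℂ, (polyIter g n).eval (C c) =
      g.eval ((polyIter g (n-1)).eval (C c)) := by
    intro c
    have hh : n = (n-1)+1 := by omega
    rw [hh]
    simp [polyIter, eval_comp]
  have heq' : g.eval P = g.eval Q := by
    rw [hP, hQ, ← hiter, ← hiter]; exact heq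
  have hE : P ^ d + (X * P ^ (m-1) + ∑ i ∈ Finset.Icc 2 m, (C (α i) * X + C (β i)) * P ^ (m - i))
      = Q ^ d + (X * Q ^ (m-1) + ∑ i ∈ Finset.Icc 2 m, (C (α i) * X + C (β i)) * Q ^ (m - i)) := by
    have := heq'
    rw [eval_g_eq d m α β g hg P, eval_g_eq d m α β g hg Q] at this
    rw [← add_assoc, ← add_assoc]
    exact this
  -- degrees of the remainder parts
  have hRP : (X * P ^ (m-1) + ∑ i ∈ Finset.Icc 2 m,
      (C (α i) * X + C (β i)) * P ^ (m - i)).natDegree ≤ (m-1) * D + 1 := by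
    have := rem_deg d m hm α β P
    rwa [hPdeg] at this
  have hRQ : (X * Q ^ (m-1) + ∑ i ∈ Finset.Icc 2 m,
      (C (α i) * X + C (β i)) * Q ^ (m - i)).natDegree ≤ (m-1) * D + 1 := by
    have := rem_deg d m hm α β Q
    rwa [hQdeg] at this
  have hF : P ^ d - Q ^ d =
      (X * Q ^ (m-1) + ∑ i ∈ Finset.Icc 2 m, (C (α i) * X + C (β i)) * Q ^ (m - i))
      - (X * P ^ (m-1) + ∑ i ∈ Finset.Icc 2 m, (C (α i) * X + C (β i)) * P ^ (m - i)) := by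
    linear_combination hE
  have hFdeg : (P ^ d - Q ^ d).natDegree ≤ (m-1) * D + 1 := by
    rw [hF]
    exact le_trans (natDegree_sub_le _ _) (max_le hRQ hRP)
  set a := P.leadingCoeff with ha
  set b := Q.leadingCoeff with hb
  have hane : a ≠ 0 := leadingCoeff_ne_zero.mpr hPne
  have hbne : b ≠ 0 := leadingCoeff_ne_zero.mpr hQne
  have hmD : (m-1) * D + 1 < d * D := by
    have h1 : (m-1) * D ≤ (d-2) * D := Nat.mul_le_mul_right _ (by omega)
    have h2 : d * D = (d-2) * D + 2 * D := by
      rw [← Nat.add_mul]; congr 1; omega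
    omega
  have hab : a ^ d = b ^ d := by
    have h1 : (P ^ d - Q ^ d).coeff (d * D) = a ^ d - b ^ d := by
      rw [coeff_sub, ← hPdeg, coeff_pow_mul_natDegree, hPdeg, ← hQdeg,
        coeff_pow_mul_natDegree]
    have h2 : (P ^ d - Q ^ d).coeff (d * D) = 0 :=
      coeff_eq_zero_of_natDegree_lt (lt_of_le_of_lt hFdeg hmD)
    exact sub_eq_zero.mp (h1.symm.trans h2)
  set ζ := a / b with hζdef
  have hζne : ζ ≠ 0 := div_ne_zero hane hbne
  have hζd : ζ ^ d = 1 := by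
    rw [hζdef, div_pow, hab, div_self (pow_ne_zero _ hbne)]
  have hζb : ζ * b = a := div_mul_cancel₀ a hbne
  -- Step 1 : P = C ζ * Q
  have hPQ : P = C ζ * Q := by
    set S := P - C ζ * Q with hSdef
    have key : S = 0 := by
      by_contra hS
      set e := S.natDegree with hedef
      have hSD : S.coeff D = 0 := by
        rw [hSdef, coeff_sub, coeff_C_mul, ← hPdeg, coeff_natDegree, ← ha,
          hPdeg, ← hQdeg, coeff_natDegree, ← hb, hζb, sub_self]
      have hSdegle : e ≤ D := by
        rw [hedef, hSdef]
        apply le_trans (natDegree_sub_le _ _)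
        apply max_le hPdeg.le
        apply le_trans natDegree_mul_le
        simp [hQdeg]
      have he : e < D := by
        rcases lt_or_eq_of_le hSdegle with h | h
        · exact h
        · exfalso
          apply hS
          apply leadingCoeff_eq_zero.mp
          rw [leadingCoeff, ← hedef, h, hSD]
      have hPs : P = C ζ * Q + S := by rw [hSdef]; ring
      have hbin : P ^ d - Q ^ d = ∑ j ∈ Finset.range d,
          (C ζ * Q) ^ j * S ^ (d - j) * (d.choose j : Polynomial ℂ) := by
        rw [hPs, add_pow, Finset.sum_range_succ]
        have hlast : (C ζ * Q) ^ d * S ^ (d - d) * (d.choose d : Polynomial ℂ) = Q ^ d := by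
          simp [Nat.sub_self, mul_pow, ← C_pow, hζd]
        rw [hlast]; ring
      have hdd : d - 1 + 1 = d := by omega
      have hsplit : P ^ d - Q ^ d = (∑ j ∈ Finset.range (d-1),
          (C ζ * Q) ^ j * S ^ (d - j) * (d.choose j : Polynomial ℂ))
          + (C ζ * Q) ^ (d-1) * S ^ (d - (d-1)) * (d.choose (d-1) : Polynomial ℂ) := by
        rw [hbin, ← hdd, Finset.sum_range_succ, hdd]
      set T := (C ζ * Q) ^ (d-1) * S ^ (d - (d-1)) * (d.choose (d-1) : Polynomial ℂ) with hTdef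
      have hd1 : d - (d-1) = 1 := by omega
      have hTeq : T = C (ζ ^ (d-1) * (d.choose (d-1) : ℂ)) * (Q ^ (d-1) * S) := by
        rw [hTdef, hd1, mul_pow, ← C_pow, pow_one,
          show ((d.choose (d-1) : ℕ) : Polynomial ℂ) = C ((d.choose (d-1) : ℕ) : ℂ) from
            (C_eq_natCast _).symm, C_mul]
        ring
      have hchne : ((d.choose (d-1) : ℕ) : ℂ) ≠ 0 := by
        simp only [ne_eq, Nat.cast_eq_zero]
        have := Nat.choose_pos (show d - 1 ≤ d by omega)
        omega
      have hcoef_ne : ζ ^ (d-1) * ((d.choose (d-1) : ℕ) : ℂ) ≠ 0 :=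
        mul_ne_zero (pow_ne_zero _ hζne) hchne
      have hQS : (Q ^ (d-1) * S).natDegree = (d-1) * D + e := by
        rw [natDegree_mul (pow_ne_zero _ hQne) hS, natDegree_pow, hQdeg]
      have hTdeg : T.natDegree = (d-1) * D + e := by
        rw [hTeq, natDegree_C_mul hcoef_ne, hQS]
      have hTne : T ≠ 0 := by
        rw [hTeq]
        exact mul_ne_zero (by simpa using hcoef_ne)
          (mul_ne_zero (pow_ne_zero _ hQne) hS)
      have hGdeg : (∑ j ∈ Finset.range (d-1),
          (C ζ * Q) ^ j * S ^ (d - j) * (d.choose j : Polynomial ℂ)).natDegree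
          ≤ (d-2) * D + 2 * e := by
        apply le_trans (natDegree_sum_le _ _)
        apply (Finset.fold_max_le _).mpr
        refine ⟨by omega, ?_⟩
        intro j hj
        simp only [Finset.mem_range] at hj
        have hj2 : j ≤ d - 2 := by omega
        apply le_trans natDegree_mul_le
        apply le_trans (Nat.add_le_add_right natDegree_mul_le _)
        have b1 : ((C ζ * Q) ^ j).natDegree ≤ j * D := by
          apply le_trans natDegree_pow_le
          apply Nat.mul_le_mul_left
          apply le_trans natDegree_mul_le
          simp [hQdeg]
        have b2 : (S ^ (d - j)).natDegree ≤ (d - j) * e := natDegree_pow_le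
        have b3 : ((d.choose j : Polynomial ℂ)).natDegree = 0 := natDegree_natCast _
        have b4 : j * D + (d - j) * e ≤ (d-2) * D + 2 * e := by
          have e1 : (d - j) * e = (d - 2 - j) * e + 2 * e := by
            rw [← Nat.add_mul]; congr 1; omega
          have e2 : (d - 2 - j) * e ≤ (d - 2 - j) * D := Nat.mul_le_mul_left _ he.le
          have e3 : j * D + (d - 2 - j) * D = (d-2) * D := by
            rw [← Nat.add_mul]; congr 1; omega
          omega
        omega
      have hGT : (∑ j ∈ Finset.range (d-1),
          (C ζ * Q) ^ j * S ^ (d - j) * (d.choose j : Polynomial ℂ)).natDegree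
          < T.natDegree := by
        rw [hTdeg]
        have e4 : (d-1) * D = (d-2) * D + D := by
          have h9 : d - 1 = (d-2) + 1 := by omega
          rw [h9, Nat.add_mul, one_mul]
        omega
      have hFdeg2 : (P ^ d - Q ^ d).natDegree = (d-1) * D + e := by
        rw [hsplit, natDegree_add_eq_right_of_natDegree_lt hGT, hTdeg]
      have hcontra : (d-1) * D + e ≤ (m-1) * D + 1 := by
        rw [← hFdeg2]; exact hFdeg
      have e5 : (m-1) * D ≤ (d-2) * D := Nat.mul_le_mul_right _ (by omega)
      have e6 : (d-1) * D = (d-2) * D + D := by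
        have h9 : d - 1 = (d-2) + 1 := by omega
        rw [h9, Nat.add_mul, one_mul]
      omega
    have hk := key
    rw [hSdef] at hk
    exact sub_eq_zero.mp hk
  -- Step 2 : ζ = 1
  have hE2 := hE
  rw [hPQ] at hE2
  simp only [mul_pow, ← C_pow, hζd, C_1, one_mul] at hE2
  have hz1 : ζ ^ (m-1) = 1 := by
    have hc1 := congrArg (fun f => coeff f ((m-1)*D + 1)) hE2
    simp only [coeff_add] at hc1
    have hN1 : (m-1)*D + 1 = (m-1) * Q.natDegree + 1 := by rw [hQdeg]
    have s1 : ((X : Polynomial ℂ) * (C (ζ^(m-1)) * Q^(m-1))).coeff ((m-1)*D+1)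
        = ζ^(m-1) * b^(m-1) := by
      rw [coeff_X_mul, coeff_C_mul, show (m-1)*D = (m-1) * Q.natDegree by rw [hQdeg],
        coeff_pow_mul_natDegree]
    have s2 : ((X : Polynomial ℂ) * Q^(m-1)).coeff ((m-1)*D+1) = b^(m-1) := by
      rw [coeff_X_mul, show (m-1)*D = (m-1) * Q.natDegree by rw [hQdeg],
        coeff_pow_mul_natDegree]
    have s3 : (∑ i ∈ Finset.Icc 2 m, (C (α i) * X + C (β i)) *
        (C (ζ^(m-i)) * Q^(m-i))).coeff ((m-1)*D+1) = 0 := by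
      rw [finset_sum_coeff]
      apply Finset.sum_eq_zero
      intro i hi
      simp only [Finset.mem_Icc] at hi
      apply coeff_eq_zero_of_natDegree_lt
      have h6 := term_deg_le (α i) (β i) (ζ^(m-i)) Q (m-i)
      rw [hQdeg] at h6
      have h7 : (m-i)*D ≤ (m-2)*D := Nat.mul_le_mul_right _ (by omega)
      have h8 : (m-2)*D < (m-1)*D := (Nat.mul_lt_mul_right (show 0 < D by omega)).mpr (by omega)
      omega
    have s4 : (∑ i ∈ Finset.Icc 2 m, (C (α i) * X + C (β i)) *
        Q^(m-i)).coeff ((m-1)*D+1) = 0 := by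
      rw [finset_sum_coeff]
      apply Finset.sum_eq_zero
      intro i hi
      simp only [Finset.mem_Icc] at hi
      apply coeff_eq_zero_of_natDegree_lt
      have h6 := term_deg_le' (α i) (β i) Q (m-i)
      rw [hQdeg] at h6
      have h7 : (m-i)*D ≤ (m-2)*D := Nat.mul_le_mul_right _ (by omega)
      have h8 : (m-2)*D < (m-1)*D := (Nat.mul_lt_mul_right (show 0 < D by omega)).mpr (by omega)
      omega
    simp only [s1, s2, s3, s4] at hc1
    have h9 : ζ^(m-1) * b^(m-1) = 1 * b^(m-1) := by
      rw [one_mul]; linear_combination hc1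
    exact mul_right_cancel₀ (pow_ne_zero (m-1) hbne) h9
  rw [hz1, C_1, one_mul] at hE2
  have hsplitI : Finset.Icc 2 m = insert 2 (Finset.Icc 3 m) := by
    ext x; simp only [Finset.mem_Icc, Finset.mem_insert]; omega
  have h2notin : (2:ℕ) ∉ Finset.Icc 3 m := by simp
  have hz2 : ζ ^ (m-2) = 1 := by
    have hc2 := congrArg (fun f => coeff f ((m-2)*D + 1)) hE2
    simp only [hsplitI, Finset.sum_insert h2notin, coeff_add] at hc2
    have hN2 : (m-2)*D + 1 = (m-2) * Q.natDegree + 1 := by rw [hQdeg]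
    have t1 := coeff_term (α 2) (β 2) (ζ^(m-2)) Q (m-2) ((m-2)*D+1) hN2
    have t2 := coeff_term' (α 2) (β 2) Q (m-2) ((m-2)*D+1) hN2
    have t3 : (∑ i ∈ Finset.Icc 3 m, (C (α i) * X + C (β i)) *
        (C (ζ^(m-i)) * Q^(m-i))).coeff ((m-2)*D+1) = 0 := by
      rw [finset_sum_coeff]
      apply Finset.sum_eq_zero
      intro i hi
      simp only [Finset.mem_Icc] at hi
      apply coeff_eq_zero_of_natDegree_lt
      have h6 := term_deg_le (α i) (β i) (ζ^(m-i)) Q (m-i)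
      rw [hQdeg] at h6
      have h7 : (m-i)*D ≤ (m-3)*D := Nat.mul_le_mul_right _ (by omega)
      have h8 : (m-3)*D < (m-2)*D := (Nat.mul_lt_mul_right (show 0 < D by omega)).mpr (by omega)
      omega
    have t4 : (∑ i ∈ Finset.Icc 3 m, (C (α i) * X + C (β i)) *
        Q^(m-i)).coeff ((m-2)*D+1) = 0 := by
      rw [finset_sum_coeff]
      apply Finset.sum_eq_zero
      intro i hi
      simp only [Finset.mem_Icc] at hi
      apply coeff_eq_zero_of_natDegree_lt
      have h6 := term_deg_le' (α i) (β i) Q (m-i)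
      rw [hQdeg] at h6
      have h7 : (m-i)*D ≤ (m-3)*D := Nat.mul_le_mul_right _ (by omega)
      have h8 : (m-3)*D < (m-2)*D := (Nat.mul_lt_mul_right (show 0 < D by omega)).mpr (by omega)
      omega
    simp only [t1, t2, t3, t4] at hc2
    have h9 : α 2 * ζ^(m-2) * b^(m-2) = α 2 * b^(m-2) := by linear_combination hc2
    have h10 : ζ^(m-2) * (α 2 * b^(m-2)) = 1 * (α 2 * b^(m-2)) := by
      rw [one_mul]; linear_combination h9
    exact mul_right_cancel₀ (mul_ne_zero hα (pow_ne_zero (m-2) hbne)) h10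
  have hz : ζ = 1 := by
    have hm1 : m - 1 = (m-2) + 1 := by omega
    have := hz1
    rw [hm1, pow_succ, hz2, one_mul] at this
    exact this
  rw [hPQ, hz, C_1, one_mul]
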